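/- For every positive integer d and every edge xy of the hypercube Q_d, the Lin–Lu–Yau curvature satisfies κ_LLY(x,y) = 2/d. -/

import Mathlib

open Finset

noncomputable section

/-- The (normalized) graph Laplacian `Δf(x) = (1/deg x) ∑_{y ~ x} (f y - f x)`. -/
def graphLap {V : Type*} [Fintype V] (G : SimpleGraph V) [DecidableRel G.Adj]
    (f : V → ℝ) (x : V) : ℝ :=
  (G.degree x : ℝ)⁻¹ * ∑ y ∈ G.neighborFinset x, (f y - f x)

/-- `f` is 1-Lipschitz with respect to the graph distance. -/
def IsLip1 {V : Type*} (G : SimpleGraph V) (f : V → ℝ) : Prop :=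
  ∀ u v : V, |f u - f v| ≤ G.dist u v

/-- Lin–Lu–Yau curvature of a pair of vertices, via the limit-free
(Münch–Wojciechowski) formulation. -/
def kappaLLY {V : Type*} [Fintype V] (G : SimpleGraph V) [DecidableRel G.Adj]
    (x y : V) : ℝ :=
  sInf { r : ℝ | ∃ f : V → ℝ, IsLip1 G f ∧ f y - f x = G.dist x y ∧
      r = (graphLap G f x - graphLap G f y) / G.dist x y }

/-- `G` contains a cycle of length `n` as a subgraph: `n` distinct vertices
arranged cyclically so that consecutive ones are adjacent. -/
def HasCycleLen {V : Type*} (G : SimpleGraph V) (n : ℕ) [NeZero n] : Prop :=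
  ∃ c : Fin n → V, Function.Injective c ∧ ∀ i : Fin n, G.Adj (c i) (c (i + 1))

/-- The hypercube graph `Q d` on vertex set `{0,1}^d`: two vertices are adjacent
iff they differ in exactly one coordinate. -/
def cubeGraph (d : ℕ) : SimpleGraph (Fin d → Bool) where
  Adj x y := (Finset.univ.filter fun i => x i ≠ y i).card = 1
  symm := by
    constructor
    intro x y h
    convert h using 2
    ext i
    simp [ne_comm]
  loopless := by constructor; intro x h; simp at h

instance (d : ℕ) : DecidableRel (cubeGraph d).Adj := fun x y =>
  decidable_of_iff ((Finset.univ.filter fun i => x i ≠ y i).card = 1) Iff.rfl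

namespace HC
variable {d : ℕ}

def flip (v : Fin d → Bool) (i : Fin d) : Fin d → Bool := Function.update v i (!(v i))

lemma flip_apply (v : Fin d → Bool) (i k : Fin d) :
    flip v i k = if k = i then !(v i) else v k := Function.update_apply v i _ k

lemma adj_iff_exists {x z : Fin d → Bool} :
    (cubeGraph d).Adj x z ↔ ∃ i, z = flip x i := by
  constructor
  · intro h
    obtain ⟨a, ha⟩ := Finset.card_eq_one.mp h
    have hmem : ∀ k, x k ≠ z k ↔ k = a := by
      intro k
      constructor
      · intro hk
        have : k ∈ Finset.univ.filter fun i => x i ≠ z i := by simp [hk]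
        rw [ha] at this; simpa using this
      · intro hk
        have : k ∈ ({a} : Finset (Fin d)) := by simp [hk]
        rw [← ha] at this
        simpa using this
    refine ⟨a, funext fun k => ?_⟩
    rw [flip_apply]
    by_cases hk : k = a
    · rw [if_pos hk]
      have hne := (hmem k).mpr hk
      subst hk
      cases hx : x k <;> cases hz : z k <;> simp_all
    · rw [if_neg hk]
      have := (hmem k).not
      simp only [not_not] at this
      exact (this.2 hk).symm
  · rintro ⟨i, rfl⟩
    show (Finset.univ.filter fun k => x k ≠ flip x i k).card = 1
    have : (Finset.univ.filter fun k => x k ≠ flip x i k) = {i} := by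
      ext k
      simp only [mem_filter, mem_univ, true_and, mem_singleton, flip_apply]
      by_cases hk : k = i
      · subst hk; simp
      · simp [hk]
    rw [this]; simp

lemma flip_injective (x : Fin d → Bool) : Function.Injective (flip x) := by
  intro i i' h
  by_contra hne
  have h1 := congrFun h i
  rw [flip_apply, flip_apply, if_pos rfl, if_neg hne] at h1
  simp at h1

lemma neighborFinset_eq (x : Fin d → Bool) :
    (cubeGraph d).neighborFinset x = Finset.univ.image (flip x) := by
  ext z
  simp only [SimpleGraph.mem_neighborFinset, mem_image, mem_univ, true_and]
  rw [adj_iff_exists]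
  exact ⟨fun ⟨i, h⟩ => ⟨i, h.symm⟩, fun ⟨i, h⟩ => ⟨i, h.symm⟩⟩

lemma degree_eq (x : Fin d → Bool) : (cubeGraph d).degree x = d := by
  rw [SimpleGraph.degree, neighborFinset_eq,
    Finset.card_image_of_injective _ (flip_injective x)]
  simp

lemma sum_neighbors (x : Fin d → Bool) (g : (Fin d → Bool) → ℝ) :
    ∑ z ∈ (cubeGraph d).neighborFinset x, g z = ∑ i, g (flip x i) := by
  rw [neighborFinset_eq, Finset.sum_image]
  intro i _ i' _ h
  exact flip_injective x h

lemma reachable_aux : ∀ n (u v : Fin d → Bool),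
    (Finset.univ.filter fun k => u k ≠ v k).card = n → (cubeGraph d).Reachable u v := by
  intro n
  induction n with
  | zero =>
    intro u v h
    have : u = v := by
      funext k
      by_contra hk
      have : k ∈ Finset.univ.filter fun k => u k ≠ v k := by simp [hk]
      rw [Finset.card_eq_zero.mp h] at this
      simp at this
    exact this ▸ SimpleGraph.Reachable.refl u
  | succ n ih =>
    intro u v h
    have hne : (Finset.univ.filter fun k => u k ≠ v k).Nonempty :=
      Finset.card_pos.mp (h ▸ Nat.succ_pos n)
    obtain ⟨i, hi⟩ := hne
    simp only [mem_filter, mem_univ, true_and] at hi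
    have hadj : (cubeGraph d).Adj u (flip u i) := adj_iff_exists.mpr ⟨i, rfl⟩
    have hfilter : (Finset.univ.filter fun k => flip u i k ≠ v k)
        = (Finset.univ.filter fun k => u k ≠ v k).erase i := by
      ext k
      simp only [mem_filter, mem_univ, true_and, mem_erase, flip_apply]
      by_cases hk : k = i
      · subst hk
        simp only [if_pos rfl]
        constructor
        · intro hc; exact absurd (by cases hu : u k <;> cases hv : v k <;> simp_all) hc
        · rintro ⟨hc, -⟩; exact absurd rfl hc
      · simp [hk]
    have hcard : (Finset.univ.filter fun k => flip u i k ≠ v k).card = n := by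
      rw [hfilter, Finset.card_erase_of_mem (by simp [hi]), h]
      rfl
    exact hadj.reachable.trans (ih _ v hcard)

lemma cube_reachable (u v : Fin d → Bool) : (cubeGraph d).Reachable u v :=
  reachable_aux _ u v rfl

lemma one_le_dist {u v : Fin d → Bool} (h : u ≠ v) : 1 ≤ (cubeGraph d).dist u v :=
  (cube_reachable u v).pos_dist_of_ne h

end HC

namespace HC
variable {d : ℕ}

lemma flip_comm {x : Fin d → Bool} {i j : Fin d} (hij : i ≠ j) :
    flip (flip x i) j = flip (flip x j) i := by
  funext k
  simp only [flip_apply]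
  by_cases hk : k = i
  · subst hk
    rw [if_neg hij, if_pos rfl, if_pos rfl, if_neg hij]
  · by_cases hk' : k = j
    · subst hk'
      rw [if_pos rfl, if_pos rfl, if_neg (Ne.symm hij), if_neg (Ne.symm hij)]
    · simp [hk, hk']

lemma flip_flip (x : Fin d → Bool) (j : Fin d) : flip (flip x j) j = x := by
  funext k
  simp only [flip_apply]
  by_cases hk : k = j
  · subst hk; simp
  · simp [hk]

end HC


theorem hypercube_curvature (d : ℕ) (hd : 0 < d) (x y : Fin d → Bool)
    (hxy : (cubeGraph d).Adj x y) :
    kappaLLY (cubeGraph d) x y = 2 / d := by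
  classical
  obtain ⟨j, hj⟩ := HC.adj_iff_exists.mp hxy
  have hyx : HC.flip y j = x := by rw [hj, HC.flip_flip]
  have hdist : (cubeGraph d).dist x y = 1 := SimpleGraph.dist_eq_one_iff_adj.mpr hxy
  have hdistR : ((cubeGraph d).dist x y : ℝ) = 1 := by rw [hdist]; norm_num
  have hxj : x j ≠ y j := by
    rw [hj, HC.flip_apply, if_pos rfl]
    cases x j <;> simp
  have hxk : ∀ k, k ≠ j → x k = y k := by
    intro k hk
    rw [hj, HC.flip_apply, if_neg hk]
  have hdR : (0:ℝ) < d := by exact_mod_cast hd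
  set S := { r : ℝ | ∃ f : (Fin d → Bool) → ℝ, IsLip1 (cubeGraph d) f ∧
      f y - f x = (cubeGraph d).dist x y ∧
      r = (graphLap (cubeGraph d) f x - graphLap (cubeGraph d) f y) /
        (cubeGraph d).dist x y } with hS
  -- lower bound
  have hlb : ∀ r ∈ S, 2 / (d:ℝ) ≤ r := by
    rintro r ⟨f, hlip, hfd, rfl⟩
    rw [hdistR, div_one]
    have hfd1 : f y - f x = 1 := by rw [hfd, hdistR]
    have hlapx : graphLap (cubeGraph d) f x
        = (d:ℝ)⁻¹ * ∑ i, (f (HC.flip x i) - f x) := by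
      rw [graphLap, HC.degree_eq, HC.sum_neighbors]
    have hlapy : graphLap (cubeGraph d) f y
        = (d:ℝ)⁻¹ * ∑ i, (f (HC.flip y i) - f y) := by
      rw [graphLap, HC.degree_eq, HC.sum_neighbors]
    rw [hlapx, hlapy, ← mul_sub, ← Finset.sum_sub_distrib]
    have hterm : ∀ i : Fin d,
        (if i = j then (2:ℝ) else 0) ≤
          (f (HC.flip x i) - f x) - (f (HC.flip y i) - f y) := by
      intro i
      by_cases hij : i = j
      · subst hij
        rw [← hj, hyx, if_pos rfl]
        linarith
      · rw [if_neg hij]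
        have hadj : (cubeGraph d).Adj (HC.flip x i) (HC.flip y i) := by
          have : HC.flip y i = HC.flip (HC.flip x i) j := by
            rw [hj, HC.flip_comm (Ne.symm (fun h => hij h.symm))]
          exact HC.adj_iff_exists.mpr ⟨j, this⟩
        have hd1 : ((cubeGraph d).dist (HC.flip x i) (HC.flip y i) : ℝ) = 1 := by
          rw [SimpleGraph.dist_eq_one_iff_adj.mpr hadj]; norm_num
        have := hlip (HC.flip x i) (HC.flip y i)
        rw [hd1] at this
        have h2 := abs_le.mp this
        linarith [h2.1]
    have hsum : (2:ℝ) ≤ ∑ i, ((f (HC.flip x i) - f x) - (f (HC.flip y i) - f y)) := by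
      calc (2:ℝ) = ∑ i : Fin d, (if i = j then (2:ℝ) else 0) := by
            rw [Finset.sum_ite_eq' Finset.univ j (fun _ => (2:ℝ))]; simp
        _ ≤ _ := Finset.sum_le_sum (fun i _ => hterm i)
    calc (2:ℝ)/d = (d:ℝ)⁻¹ * 2 := by field_simp
      _ ≤ _ := by
          apply mul_le_mul_of_nonneg_left hsum
          positivity
  -- witness
  set f0 : (Fin d → Bool) → ℝ := fun v => if v j = y j then 1 else 0 with hf0
  have hf0y : f0 y = 1 := by simp [hf0]
  have hf0x : f0 x = 0 := by simp [hf0, hxj]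
  have hlip0 : IsLip1 (cubeGraph d) f0 := by
    intro u v
    by_cases huv : u j = v j
    · have : f0 u = f0 v := by simp [hf0, huv]
      rw [this, sub_self, abs_zero]
      exact_mod_cast Nat.zero_le _
    · have hne : u ≠ v := fun h => huv (by rw [h])
      have h1 : (1:ℝ) ≤ (cubeGraph d).dist u v := by
        exact_mod_cast HC.one_le_dist hne
      refine le_trans ?_ h1
      simp only [hf0]
      split_ifs <;> norm_num
  have hlap0x : graphLap (cubeGraph d) f0 x = (d:ℝ)⁻¹ := by
    rw [graphLap, HC.degree_eq, HC.sum_neighbors]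
    have : ∀ i : Fin d, f0 (HC.flip x i) - f0 x = if i = j then 1 else 0 := by
      intro i
      rw [hf0x, sub_zero]
      by_cases hij : i = j
      · subst hij; rw [← hj, hf0y, if_pos rfl]
      · rw [if_neg hij, hf0]
        simp only
        rw [if_neg]
        rw [HC.flip_apply, if_neg (fun h => hij h.symm)]
        exact hxj
    rw [Finset.sum_congr rfl (fun i _ => this i),
      Finset.sum_ite_eq' Finset.univ j (fun _ => (1:ℝ))]
    simp
  have hlap0y : graphLap (cubeGraph d) f0 y = -(d:ℝ)⁻¹ := by
    rw [graphLap, HC.degree_eq, HC.sum_neighbors]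
    have : ∀ i : Fin d, f0 (HC.flip y i) - f0 y = if i = j then -1 else 0 := by
      intro i
      rw [hf0y]
      by_cases hij : i = j
      · subst hij; rw [hyx, hf0x, if_pos rfl]; norm_num
      · rw [if_neg hij]
        have hv : (HC.flip y i) j = y j := by
          rw [HC.flip_apply, if_neg (fun h => hij h.symm)]
        have : f0 (HC.flip y i) = 1 := by simp [hf0, hv]
        rw [this]; norm_num
    rw [Finset.sum_congr rfl (fun i _ => this i),
      Finset.sum_ite_eq' Finset.univ j (fun _ => (-1:ℝ))]
    simp [hdR.ne']
  have hmem : (2 / (d:ℝ)) ∈ S := by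
    refine ⟨f0, hlip0, by rw [hf0y, hf0x, hdistR]; norm_num, ?_⟩
    rw [hlap0x, hlap0y, hdistR]
    field_simp
    ring
  rw [kappaLLY, ← hS]
  exact le_antisymm (csInf_le ⟨2/(d:ℝ), fun r hr => hlb r hr⟩ hmem)
    (le_csInf ⟨_, hmem⟩ hlb)
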